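/- TS4 is sound and complete with respect to TS4-frames: TS4 ⊢ φ if and only if φ is valid in every TS4-frame. -/

import Mathlib

/-- Formulas of the multimodal language `ML` with modalities `□`, `■_F`, `■_P`. -/
inductive TForm : Type
  | var : Nat → TForm
  | bot : TForm
  | and : TForm → TForm → TForm
  | or  : TForm → TForm → TForm
  | imp : TForm → TForm → TForm
  | box : TForm → TForm
  | bF  : TForm → TForm
  | bP  : TForm → TForm

def TForm.neg (φ : TForm) : TForm := φ.imp TForm.bot
def TForm.iff (φ ψ : TForm) : TForm := (φ.imp ψ).and (ψ.imp φ)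
/-- `◇φ := ¬□¬φ`. -/
def TForm.dia (φ : TForm) : TForm := ((φ.neg).box).neg
/-- `◆_F φ := ¬■_F¬φ`. -/
def TForm.dF (φ : TForm) : TForm := ((φ.neg).bF).neg
/-- `◆_P φ := ¬■_P¬φ`. -/
def TForm.dP (φ : TForm) : TForm := ((φ.neg).bP).neg

/-- The logic `TS4`: classical logic with S4-axioms for `□`, `■_F` and `■_P`,
the tense axioms `p → ■_P◆_F p` and `p → ■_F◆_P p`, and the connecting axioms
`◇p → ◆_F p` and `◆_F p → ◇(◆_F p ∧ ◆_P p)`, closed under modus ponens and the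
three necessitation rules (axioms are given as schemes, hence closure under
uniform substitution is automatic). -/
inductive TS4 : TForm → Prop
  -- classical propositional axioms
  | a1 (φ ψ : TForm) : TS4 (φ.imp (ψ.imp φ))
  | a2 (φ ψ χ : TForm) : TS4 ((φ.imp (ψ.imp χ)).imp ((φ.imp ψ).imp (φ.imp χ)))
  | a3 (φ ψ : TForm) : TS4 ((φ.and ψ).imp φ)
  | a4 (φ ψ : TForm) : TS4 ((φ.and ψ).imp ψ)
  | a5 (φ ψ : TForm) : TS4 (φ.imp (ψ.imp (φ.and ψ)))
  | a6 (φ ψ : TForm) : TS4 (φ.imp (φ.or ψ))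
  | a7 (φ ψ : TForm) : TS4 (ψ.imp (φ.or ψ))
  | a8 (φ ψ χ : TForm) : TS4 ((φ.imp χ).imp ((ψ.imp χ).imp ((φ.or ψ).imp χ)))
  | a9 (φ : TForm) : TS4 (TForm.bot.imp φ)
  | dne (φ : TForm) : TS4 ((φ.neg.neg).imp φ)
  -- S4-axioms for □
  | boxK (φ ψ : TForm) : TS4 (((φ.imp ψ).box).imp ((φ.box).imp ψ.box))
  | boxT (φ : TForm) : TS4 ((φ.box).imp φ)
  | box4 (φ : TForm) : TS4 ((φ.box).imp φ.box.box)
  -- S4-axioms for ■_F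
  | bFK (φ ψ : TForm) : TS4 (((φ.imp ψ).bF).imp ((φ.bF).imp ψ.bF))
  | bFT (φ : TForm) : TS4 ((φ.bF).imp φ)
  | bF4 (φ : TForm) : TS4 ((φ.bF).imp φ.bF.bF)
  -- S4-axioms for ■_P
  | bPK (φ ψ : TForm) : TS4 (((φ.imp ψ).bP).imp ((φ.bP).imp ψ.bP))
  | bPT (φ : TForm) : TS4 ((φ.bP).imp φ)
  | bP4 (φ : TForm) : TS4 ((φ.bP).imp φ.bP.bP)
  -- tense axioms
  | tense1 (φ : TForm) : TS4 (φ.imp ((φ.dF).bP))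
  | tense2 (φ : TForm) : TS4 (φ.imp ((φ.dP).bF))
  -- connecting axioms
  | conn1 (φ : TForm) : TS4 ((φ.dia).imp φ.dF)
  | conn2 (φ : TForm) : TS4 ((φ.dF).imp (((φ.dF).and φ.dP).dia))
  -- rules
  | mp (φ ψ : TForm) : TS4 (φ.imp ψ) → TS4 φ → TS4 ψ
  | necBox (φ : TForm) : TS4 φ → TS4 φ.box
  | necF (φ : TForm) : TS4 φ → TS4 φ.bF
  | necP (φ : TForm) : TS4 φ → TS4 φ.bP

/-- `(X,R,Q)` is a TS4-frame: `R`, `Q` are quasi-orders, `R ⊆ Q`, and `xQy`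
implies there is `z` with `xRz` and `z E_Q y`. -/
structure IsTS4Frame {X : Type} (R Q : X → X → Prop) : Prop where
  rrefl : ∀ x, R x x
  rtrans : ∀ x y z, R x y → R y z → R x z
  qrefl : ∀ x, Q x x
  qtrans : ∀ x y z, Q x y → Q y z → Q x z
  rsubq : ∀ x y, R x y → Q x y
  pass : ∀ x y, Q x y → ∃ z, R x z ∧ Q z y ∧ Q y z

/-- Satisfaction in a TS4-frame: `□` is interpreted via `R`-successors, `■_F`
via `Q`-successors and `■_P` via `Q`-predecessors. -/
def tsat {X : Type} (R Q : X → X → Prop) (v : Nat → Set X) : TForm → X → Prop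
  | .var n, x => x ∈ v n
  | .bot, _ => False
  | .and φ ψ, x => tsat R Q v φ x ∧ tsat R Q v ψ x
  | .or φ ψ, x => tsat R Q v φ x ∨ tsat R Q v ψ x
  | .imp φ ψ, x => tsat R Q v φ x → tsat R Q v ψ x
  | .box φ, x => ∀ y, R x y → tsat R Q v φ y
  | .bF φ, x => ∀ y, Q x y → tsat R Q v φ y
  | .bP φ, x => ∀ y, Q y x → tsat R Q v φ y

/-- Validity in a TS4-frame. -/
def tValid {X : Type} (R Q : X → X → Prop) (φ : TForm) : Prop :=
  ∀ (v : Nat → Set X) (x : X), tsat R Q v φ x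


deriving instance DecidableEq for TForm

namespace TS4Canon
open TForm

/-! ### Derived propositional rules -/

lemma tI (φ : TForm) : TS4 (φ.imp φ) :=
  TS4.mp _ _ (TS4.mp _ _ (TS4.a2 φ (φ.imp φ) φ) (TS4.a1 φ (φ.imp φ))) (TS4.a1 φ φ)

lemma syll {φ ψ χ : TForm} (h1 : TS4 (φ.imp ψ)) (h2 : TS4 (ψ.imp χ)) :
    TS4 (φ.imp χ) :=
  TS4.mp _ _ (TS4.mp _ _ (TS4.a2 φ ψ χ) (TS4.mp _ _ (TS4.a1 (ψ.imp χ) φ) h2)) h1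

lemma monImp {x A B : TForm} (h : TS4 (A.imp B)) : TS4 ((x.imp A).imp (x.imp B)) :=
  TS4.mp _ _ (TS4.a2 x A B) (TS4.mp _ _ (TS4.a1 (A.imp B) x) h)

lemma mp2 {X Y Z : TForm} (h : TS4 (X.imp (Y.imp Z))) (hy : TS4 Y) : TS4 (X.imp Z) :=
  TS4.mp _ _ (TS4.mp _ _ (TS4.a2 X Y Z) h) (TS4.mp _ _ (TS4.a1 Y X) hy)

lemma mpd {X Y Z : TForm} (h1 : TS4 (X.imp (Y.imp Z))) (h2 : TS4 (X.imp Y)) :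
    TS4 (X.imp Z) :=
  TS4.mp _ _ (TS4.mp _ _ (TS4.a2 X Y Z) h1) h2

lemma tB (X Y Z : TForm) : TS4 ((Y.imp Z).imp ((X.imp Y).imp (X.imp Z))) :=
  syll (TS4.a1 (Y.imp Z) X) (TS4.a2 X Y Z)

/-- precomposition / contraposition -/
lemma pre {X Y : TForm} (Z : TForm) (h : TS4 (X.imp Y)) :
    TS4 ((Y.imp Z).imp (X.imp Z)) :=
  mp2 (tB X Y Z) h

lemma flipR {p q r : TForm} (h : TS4 (p.imp (q.imp r))) : TS4 (q.imp (p.imp r)) :=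
  TS4.mp _ _ (pre (p.imp r) (TS4.a1 q p)) (TS4.mp _ _ (TS4.a2 p q r) h)

lemma andI {X A B : TForm} (h1 : TS4 (X.imp A)) (h2 : TS4 (X.imp B)) :
    TS4 (X.imp (A.and B)) :=
  mpd (syll h1 (TS4.a5 A B)) h2

lemma curry {a b c : TForm} (h : TS4 ((a.and b).imp c)) : TS4 (b.imp (a.imp c)) := by
  have comm : TS4 ((b.and a).imp (a.and b)) := andI (TS4.a4 b a) (TS4.a3 b a)
  have h' : TS4 ((b.and a).imp c) := syll comm h
  exact syll (TS4.a5 b a) (monImp h')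

lemma negE (φ ψ : TForm) : TS4 ((φ.neg).imp (φ.imp ψ)) := monImp (TS4.a9 ψ)

lemma dni (φ : TForm) : TS4 (φ.imp φ.neg.neg) := flipR (tI φ.neg)

lemma boxMon {A B : TForm} (h : TS4 (A.imp B)) : TS4 ((A.box).imp B.box) :=
  TS4.mp _ _ (TS4.boxK A B) (TS4.necBox _ h)
lemma bFMon {A B : TForm} (h : TS4 (A.imp B)) : TS4 ((A.bF).imp B.bF) :=
  TS4.mp _ _ (TS4.bFK A B) (TS4.necF _ h)
lemma bPMon {A B : TForm} (h : TS4 (A.imp B)) : TS4 ((A.bP).imp B.bP) :=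
  TS4.mp _ _ (TS4.bPK A B) (TS4.necP _ h)

lemma boxPair (a b : TForm) : TS4 ((a.box).imp ((b.box).imp ((a.and b).box))) :=
  syll (boxMon (TS4.a5 a b)) (TS4.boxK b (a.and b))
lemma bFPair (a b : TForm) : TS4 ((a.bF).imp ((b.bF).imp ((a.and b).bF))) :=
  syll (bFMon (TS4.a5 a b)) (TS4.bFK b (a.and b))
lemma bPPair (a b : TForm) : TS4 ((a.bP).imp ((b.bP).imp ((a.and b).bP))) :=
  syll (bPMon (TS4.a5 a b)) (TS4.bPK b (a.and b))

/-! ### Finite conjunctions -/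

def conj : List TForm → TForm
  | [] => TForm.neg .bot
  | a :: L => a.and (conj L)

lemma notBot : TS4 (TForm.neg .bot) := tI .bot

lemma conjProj {ψ : TForm} : ∀ {L : List TForm}, ψ ∈ L → TS4 ((conj L).imp ψ)
  | a :: L, h => by
    rcases List.mem_cons.1 h with h | h
    · subst h; exact TS4.a3 _ _
    · exact syll (TS4.a4 _ _) (conjProj h)

lemma conjTop (X : TForm) : TS4 (X.imp (TForm.neg .bot)) :=
  TS4.mp _ _ (TS4.a1 _ X) notBot

lemma conjSub {M : List TForm} : ∀ {L : List TForm}, (∀ ψ ∈ L, ψ ∈ M) →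
    TS4 ((conj M).imp (conj L))
  | [], _ => conjTop _
  | a :: L, h =>
    andI (conjProj (h a (List.mem_cons_self)))
      (conjSub fun ψ hψ => h ψ (List.mem_cons_of_mem a hψ))

lemma conjAppend : ∀ (L M : List TForm),
    TS4 (((conj L).and (conj M)).imp (conj (L ++ M)))
  | [], M => TS4.a4 _ _
  | a :: L, M => by
    refine andI (syll (TS4.a3 _ _) (TS4.a3 _ _)) ?_
    exact syll (andI (syll (TS4.a3 _ _) (TS4.a4 _ _)) (TS4.a4 _ _)) (conjAppend L M)

lemma conjBox : ∀ (L : List TForm), TS4 ((conj (L.map .box)).imp (conj L).box)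
  | [] => TS4.mp _ _ (TS4.a1 _ _) (TS4.necBox _ notBot)
  | a :: L =>
    mpd (syll (TS4.a3 _ _) (boxPair a (conj L))) (syll (TS4.a4 _ _) (conjBox L))
lemma conjbF : ∀ (L : List TForm), TS4 ((conj (L.map .bF)).imp (conj L).bF)
  | [] => TS4.mp _ _ (TS4.a1 _ _) (TS4.necF _ notBot)
  | a :: L =>
    mpd (syll (TS4.a3 _ _) (bFPair a (conj L))) (syll (TS4.a4 _ _) (conjbF L))
lemma conjbP : ∀ (L : List TForm), TS4 ((conj (L.map .bP)).imp (conj L).bP)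
  | [] => TS4.mp _ _ (TS4.a1 _ _) (TS4.necP _ notBot)
  | a :: L =>
    mpd (syll (TS4.a3 _ _) (bPPair a (conj L))) (syll (TS4.a4 _ _) (conjbP L))

/-! ### Provability from a set of hypotheses -/

def Prov (Γ : Set TForm) (φ : TForm) : Prop :=
  ∃ L : List TForm, (∀ ψ ∈ L, ψ ∈ Γ) ∧ TS4 ((conj L).imp φ)

lemma Prov.thm {Γ : Set TForm} {φ : TForm} (h : TS4 φ) : Prov Γ φ :=
  ⟨[], by simp, TS4.mp _ _ (TS4.a1 φ _) h⟩

lemma Prov.mem {Γ : Set TForm} {φ : TForm} (h : φ ∈ Γ) : Prov Γ φ :=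
  ⟨[φ], by simpa using h, conjProj (List.mem_singleton_self φ)⟩

lemma Prov.mp {Γ : Set TForm} {φ ψ : TForm} (h1 : Prov Γ (φ.imp ψ)) (h2 : Prov Γ φ) :
    Prov Γ ψ := by
  obtain ⟨L1, hL1, d1⟩ := h1
  obtain ⟨L2, hL2, d2⟩ := h2
  refine ⟨L1 ++ L2, ?_, ?_⟩
  · intro χ hχ; rcases List.mem_append.1 hχ with h | h
    · exact hL1 χ h
    · exact hL2 χ h
  · have e1 : TS4 ((conj (L1 ++ L2)).imp (conj L1)) :=
      conjSub fun χ hχ => List.mem_append.2 (Or.inl hχ)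
    have e2 : TS4 ((conj (L1 ++ L2)).imp (conj L2)) :=
      conjSub fun χ hχ => List.mem_append.2 (Or.inr hχ)
    exact mpd (syll e1 d1) (syll e2 d2)

lemma Prov.mono {Γ Δ : Set TForm} {φ : TForm} (h : Γ ⊆ Δ) (hp : Prov Γ φ) : Prov Δ φ := by
  obtain ⟨L, hL, d⟩ := hp; exact ⟨L, fun ψ hψ => h (hL ψ hψ), d⟩

lemma deduction {Γ : Set TForm} {φ ψ : TForm} (h : Prov (insert φ Γ) ψ) :
    Prov Γ (φ.imp ψ) := by
  obtain ⟨L, hL, d⟩ := h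
  refine ⟨L.filter (· ≠ φ), ?_, ?_⟩
  · intro χ hχ
    have := List.mem_filter.1 hχ
    rcases hL χ this.1 with h | h
    · exact absurd h (by simpa using this.2)
    · exact h
  · have hsub : ∀ χ ∈ L, χ ∈ φ :: L.filter (· ≠ φ) := by
      intro χ hχ
      by_cases hc : χ = φ
      · exact hc ▸ List.mem_cons_self
      · exact List.mem_cons_of_mem _ (List.mem_filter.2 ⟨hχ, by simpa using hc⟩)
    exact curry (syll (conjSub hsub) d)

end TS4Canon

namespace TS4Canon
open TForm

/-! ### Consistent and maximal consistent sets -/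

def Con (Γ : Set TForm) : Prop := ¬ Prov Γ .bot

def MCS (Γ : Set TForm) : Prop := Con Γ ∧ ∀ φ : TForm, φ ∈ Γ ∨ φ.neg ∈ Γ

variable {Γ : Set TForm}

lemma MCS.prov (h : MCS Γ) {φ : TForm} (hp : Prov Γ φ) : φ ∈ Γ := by
  rcases h.2 φ with hm | hm
  · exact hm
  · exact absurd ((Prov.mem hm).mp hp) h.1

lemma MCS.thm (h : MCS Γ) {φ : TForm} (hp : TS4 φ) : φ ∈ Γ := h.prov (Prov.thm hp)

lemma MCS.mp (h : MCS Γ) {φ ψ : TForm} (h1 : φ.imp ψ ∈ Γ) (h2 : φ ∈ Γ) : ψ ∈ Γ :=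
  h.prov ((Prov.mem h1).mp (Prov.mem h2))

lemma MCS.not_bot (h : MCS Γ) : (TForm.bot) ∉ Γ := fun hb => h.1 (Prov.mem hb)

lemma MCS.neg_iff (h : MCS Γ) {φ : TForm} : φ.neg ∈ Γ ↔ φ ∉ Γ := by
  constructor
  · intro hn hp; exact h.not_bot (h.mp hn hp)
  · intro hp; exact (h.2 φ).resolve_left hp

lemma MCS.imp_iff (h : MCS Γ) {φ ψ : TForm} : φ.imp ψ ∈ Γ ↔ (φ ∈ Γ → ψ ∈ Γ) := by
  constructor
  · exact h.mp
  · intro hi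
    by_cases hφ : φ ∈ Γ
    · exact h.mp (h.thm (TS4.a1 ψ φ)) (hi hφ)
    · exact h.mp (h.thm (negE φ ψ)) (h.neg_iff.2 hφ)

lemma MCS.and_iff (h : MCS Γ) {φ ψ : TForm} : φ.and ψ ∈ Γ ↔ (φ ∈ Γ ∧ ψ ∈ Γ) := by
  constructor
  · intro ha; exact ⟨h.mp (h.thm (TS4.a3 φ ψ)) ha, h.mp (h.thm (TS4.a4 φ ψ)) ha⟩
  · intro ⟨h1, h2⟩; exact h.mp (h.mp (h.thm (TS4.a5 φ ψ)) h1) h2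

lemma MCS.or_iff (h : MCS Γ) {φ ψ : TForm} : φ.or ψ ∈ Γ ↔ (φ ∈ Γ ∨ ψ ∈ Γ) := by
  constructor
  · intro ho
    by_contra hc
    push_neg at hc
    have h1 := h.neg_iff.2 hc.1
    have h2 := h.neg_iff.2 hc.2
    have := h.mp (h.mp (h.mp (h.thm (TS4.a8 φ ψ .bot)) h1) h2) ho
    exact h.not_bot this
  · rintro (h1 | h1)
    · exact h.mp (h.thm (TS4.a6 φ ψ)) h1
    · exact h.mp (h.thm (TS4.a7 φ ψ)) h1

/-! ### Encoding of formulas -/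

def enc : TForm → ℕ
  | .var n => Nat.pair 0 n
  | .bot => Nat.pair 1 0
  | .and a b => Nat.pair 2 (Nat.pair (enc a) (enc b))
  | .or a b => Nat.pair 3 (Nat.pair (enc a) (enc b))
  | .imp a b => Nat.pair 4 (Nat.pair (enc a) (enc b))
  | .box a => Nat.pair 5 (enc a)
  | .bF a => Nat.pair 6 (enc a)
  | .bP a => Nat.pair 7 (enc a)

lemma enc_inj : Function.Injective enc := by
  intro a
  induction a with
  | var n => intro b hb; cases b <;> simp_all [enc, Nat.pair_eq_pair]
  | bot => intro b hb; cases b <;> simp [enc, Nat.pair_eq_pair] at hb ⊢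
  | and a1 a2 ih1 ih2 =>
      intro b hb; cases b <;> simp [enc, Nat.pair_eq_pair] at hb
      exact congrArg₂ TForm.and (ih1 hb.1) (ih2 hb.2)
  | or a1 a2 ih1 ih2 =>
      intro b hb; cases b <;> simp [enc, Nat.pair_eq_pair] at hb
      exact congrArg₂ TForm.or (ih1 hb.1) (ih2 hb.2)
  | imp a1 a2 ih1 ih2 =>
      intro b hb; cases b <;> simp [enc, Nat.pair_eq_pair] at hb
      exact congrArg₂ TForm.imp (ih1 hb.1) (ih2 hb.2)
  | box a ih => intro b hb; cases b <;> simp [enc, Nat.pair_eq_pair] at hb; exact congrArg TForm.box (ih hb)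
  | bF a ih => intro b hb; cases b <;> simp [enc, Nat.pair_eq_pair] at hb; exact congrArg TForm.bF (ih hb)
  | bP a ih => intro b hb; cases b <;> simp [enc, Nat.pair_eq_pair] at hb; exact congrArg TForm.bP (ih hb)

instance : Nonempty TForm := ⟨.bot⟩

noncomputable def dec : ℕ → TForm := Function.invFun enc

lemma dec_enc (φ : TForm) : dec (enc φ) = φ := Function.leftInverse_invFun enc_inj φ

/-! ### Lindenbaum -/

open Classical in
noncomputable def seq (Γ : Set TForm) : ℕ → Set TForm
  | 0 => Γ
  | n + 1 =>
      if Con (insert (dec n) (seq Γ n)) then insert (dec n) (seq Γ n)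
      else insert (dec n).neg (seq Γ n)

lemma seq_mono_succ (Γ : Set TForm) (n : ℕ) : seq Γ n ⊆ seq Γ (n + 1) := by
  simp only [seq]
  split <;> exact Set.subset_insert _ _

lemma seq_mono (Γ : Set TForm) {m n : ℕ} (h : m ≤ n) : seq Γ m ⊆ seq Γ n := by
  induction n with
  | zero => simp_all
  | succ n ih =>
      rcases Nat.lt_or_ge m (n+1) with h' | h'
      · exact (ih (Nat.lt_succ_iff.1 h')).trans (seq_mono_succ Γ n)
      · have : m = n + 1 := le_antisymm h h'
        subst this; rfl

lemma con_insert_neg {φ : TForm} (hΓ : Con Γ) (h : ¬ Con (insert φ Γ)) :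
    Con (insert φ.neg Γ) := by
  intro hc
  have h1 : Prov Γ φ.neg := deduction (not_not.1 h)
  have h2 : Prov Γ (φ.neg.imp .bot) := deduction hc
  exact hΓ (h2.mp h1)

lemma seq_con (hΓ : Con Γ) : ∀ n, Con (seq Γ n)
  | 0 => hΓ
  | n + 1 => by
      simp only [seq]
      split
      · assumption
      · exact con_insert_neg (seq_con hΓ n) (by assumption)

lemma list_in_seq {Γ : Set TForm} :
    ∀ {L : List TForm}, (∀ ψ ∈ L, ψ ∈ ⋃ n, seq Γ n) → ∃ N, ∀ ψ ∈ L, ψ ∈ seq Γ N := by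
  intro L
  induction L with
  | nil => intro _; exact ⟨0, by simp⟩
  | cons a L ih =>
      intro h
      obtain ⟨N, hN⟩ := ih fun ψ hψ => h ψ (List.mem_cons_of_mem a hψ)
      obtain ⟨M, hM⟩ := Set.mem_iUnion.1 (h a (List.mem_cons_self))
      refine ⟨max M N, ?_⟩
      intro ψ hψ
      rcases List.mem_cons.1 hψ with h' | h'
      · exact h' ▸ seq_mono Γ (le_max_left _ _) hM
      · exact seq_mono Γ (le_max_right _ _) (hN ψ h')

lemma lindenbaum (hΓ : Con Γ) : ∃ Δ, Γ ⊆ Δ ∧ MCS Δ := by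
  refine ⟨⋃ n, seq Γ n, fun φ h => Set.mem_iUnion.2 ⟨0, h⟩, ?_, ?_⟩
  · intro ⟨L, hL, d⟩
    obtain ⟨N, hN⟩ := list_in_seq hL
    exact seq_con hΓ N ⟨L, hN, d⟩
  · intro φ
    have : seq Γ (enc φ + 1) ⊆ ⋃ n, seq Γ n := fun ψ h => Set.mem_iUnion.2 ⟨_, h⟩
    simp only [seq, dec_enc] at this
    split at this
    · exact Or.inl (this (Set.mem_insert _ _))
    · exact Or.inr (this (Set.mem_insert _ _))

end TS4Canon

namespace TS4Canon
open TForm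

/-! ### The canonical model -/

def W : Type := {Γ : Set TForm // MCS Γ}

def CR (x y : W) : Prop := ∀ φ : TForm, φ.box ∈ x.1 → φ ∈ y.1
def CQ (x y : W) : Prop := ∀ φ : TForm, φ.bF ∈ x.1 → φ ∈ y.1

lemma CR.refl (x : W) : CR x x := fun φ h => x.2.mp (x.2.thm (TS4.boxT φ)) h
lemma CQ.refl (x : W) : CQ x x := fun φ h => x.2.mp (x.2.thm (TS4.bFT φ)) h

lemma CR.trans {x y z : W} (h1 : CR x y) (h2 : CR y z) : CR x z :=
  fun φ h => h2 φ (h1 φ.box (x.2.mp (x.2.thm (TS4.box4 φ)) h))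
lemma CQ.trans {x y z : W} (h1 : CQ x y) (h2 : CQ y z) : CQ x z :=
  fun φ h => h2 φ (h1 φ.bF (x.2.mp (x.2.thm (TS4.bF4 φ)) h))

/-- `■_F φ → □ φ` holds in every MCS, via `conn1`. -/
lemma bF_to_box {x : W} {φ : TForm} (h : φ.bF ∈ x.1) : φ.box ∈ x.1 := by
  have h1 : φ.neg.neg.bF ∈ x.1 := x.2.mp (x.2.thm (bFMon (dni φ))) h
  -- conn1 (φ.neg) : dia ¬φ → dF ¬φ, i.e. ¬□¬¬φ → ¬■_F¬¬φ
  have h2 : ((φ.neg.neg.box).neg).imp ((φ.neg.neg.bF).neg) ∈ x.1 :=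
    x.2.thm (TS4.conn1 φ.neg)
  have h3 : (φ.neg.neg.bF).neg ∉ x.1 := fun hc => x.2.not_bot (x.2.mp hc h1)
  have h4 : (φ.neg.neg.box).neg ∉ x.1 := fun hc => h3 (x.2.mp h2 hc)
  have h5 : φ.neg.neg.box ∈ x.1 := (x.2.2 _).resolve_right h4
  exact x.2.mp (x.2.thm (boxMon (TS4.dne φ))) h5

lemma CR.subQ {x y : W} (h : CR x y) : CQ x y := fun φ hφ => h φ (bF_to_box hφ)

/-- If `Q x y` (canonically) then `■_P ψ ∈ y → ψ ∈ x`. -/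
lemma tense_fwd {x y : W} (h : CQ x y) : ∀ ψ : TForm, ψ.bP ∈ y.1 → ψ ∈ x.1 := by
  intro ψ hψ
  by_contra hx
  have h1 : ψ.neg ∈ x.1 := x.2.neg_iff.2 hx
  have h2 : ((ψ.neg.dP).bF) ∈ x.1 := x.2.mp (x.2.thm (TS4.tense2 ψ.neg)) h1
  have h3 : ψ.neg.dP ∈ y.1 := h _ h2
  -- ψ.neg.dP = ¬ ■_P ¬¬ψ
  have h4 : ψ.neg.neg.bP ∈ y.1 := y.2.mp (y.2.thm (bPMon (dni ψ))) hψ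
  exact y.2.not_bot (y.2.mp h3 h4)

/-- If `■_P ψ ∈ y → ψ ∈ x` for all ψ, then `Q x y` canonically. -/
lemma tense_bwd {x y : W} (h : ∀ ψ : TForm, ψ.bP ∈ y.1 → ψ ∈ x.1) : CQ x y := by
  intro ψ hψ
  by_contra hy
  have h1 : ψ.neg ∈ y.1 := y.2.neg_iff.2 hy
  have h2 : ((ψ.neg.dF).bP) ∈ y.1 := y.2.mp (y.2.thm (TS4.tense1 ψ.neg)) h1
  have h3 : ψ.neg.dF ∈ x.1 := h _ h2
  have h4 : ψ.neg.neg.bF ∈ x.1 := x.2.mp (x.2.thm (bFMon (dni ψ))) hψ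
  exact x.2.not_bot (x.2.mp h3 h4)

/-! ### Existence lemmas -/

/-- generic: if every `mod ψ` for `ψ ∈ L` is in the MCS `x`, and
`⊢ conj (L.map mod) → χ`, then `χ ∈ x`. -/
lemma mem_of_conj {x : W} {L : List TForm} {χ : TForm} {mod : TForm → TForm}
    (hL : ∀ ψ ∈ L, mod ψ ∈ x.1) (d : TS4 ((conj (L.map mod)).imp χ)) : χ ∈ x.1 := by
  refine x.2.prov ⟨L.map mod, ?_, d⟩
  intro ψ hψ
  obtain ⟨a, ha, rfl⟩ := List.mem_map.1 hψ
  exact hL a ha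

lemma boxEx {x : W} {φ : TForm} (h : φ.box ∉ x.1) :
    ∃ y : W, CR x y ∧ φ ∉ y.1 := by
  have hcon : Con (insert φ.neg {ψ | ψ.box ∈ x.1}) := by
    intro hc
    have h1 : Prov {ψ | ψ.box ∈ x.1} φ.neg.neg := deduction hc
    obtain ⟨L, hL, d⟩ := h1
    have d2 : TS4 ((conj (L.map .box)).imp φ.box) :=
      syll (conjBox L) (boxMon (syll d (TS4.dne φ)))
    exact h (mem_of_conj hL d2)
  obtain ⟨Δ, hΔ1, hΔ2⟩ := lindenbaum hcon
  refine ⟨⟨Δ, hΔ2⟩, fun ψ hψ => hΔ1 (Set.mem_insert_of_mem _ hψ), ?_⟩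
  exact fun hφ => hΔ2.not_bot (hΔ2.mp (hΔ1 (Set.mem_insert _ _)) hφ)

lemma bFEx {x : W} {φ : TForm} (h : φ.bF ∉ x.1) :
    ∃ y : W, CQ x y ∧ φ ∉ y.1 := by
  have hcon : Con (insert φ.neg {ψ | ψ.bF ∈ x.1}) := by
    intro hc
    have h1 : Prov {ψ | ψ.bF ∈ x.1} φ.neg.neg := deduction hc
    obtain ⟨L, hL, d⟩ := h1
    have d2 : TS4 ((conj (L.map .bF)).imp φ.bF) :=
      syll (conjbF L) (bFMon (syll d (TS4.dne φ)))
    exact h (mem_of_conj hL d2)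
  obtain ⟨Δ, hΔ1, hΔ2⟩ := lindenbaum hcon
  refine ⟨⟨Δ, hΔ2⟩, fun ψ hψ => hΔ1 (Set.mem_insert_of_mem _ hψ), ?_⟩
  exact fun hφ => hΔ2.not_bot (hΔ2.mp (hΔ1 (Set.mem_insert _ _)) hφ)

lemma bPEx {x : W} {φ : TForm} (h : φ.bP ∉ x.1) :
    ∃ y : W, CQ y x ∧ φ ∉ y.1 := by
  have hcon : Con (insert φ.neg {ψ | ψ.bP ∈ x.1}) := by
    intro hc
    have h1 : Prov {ψ | ψ.bP ∈ x.1} φ.neg.neg := deduction hc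
    obtain ⟨L, hL, d⟩ := h1
    have d2 : TS4 ((conj (L.map .bP)).imp φ.bP) :=
      syll (conjbP L) (bPMon (syll d (TS4.dne φ)))
    exact h (mem_of_conj hL d2)
  obtain ⟨Δ, hΔ1, hΔ2⟩ := lindenbaum hcon
  refine ⟨⟨Δ, hΔ2⟩, ?_, ?_⟩
  · exact tense_bwd (x := ⟨Δ, hΔ2⟩) (y := x)
      (fun ψ hψ => hΔ1 (Set.mem_insert_of_mem _ hψ))
  · exact fun hφ => hΔ2.not_bot (hΔ2.mp (hΔ1 (Set.mem_insert _ _)) hφ)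

end TS4Canon

namespace TS4Canon
open TForm

/-! ### Diamond monotonicity and tense interaction theorems -/

lemma dFMon {A B : TForm} (h : TS4 (A.imp B)) : TS4 ((A.dF).imp B.dF) :=
  pre _ (bFMon (pre _ h))
lemma dPMon {A B : TForm} (h : TS4 (A.imp B)) : TS4 ((A.dP).imp B.dP) :=
  pre _ (bPMon (pre _ h))

/-- `⊢ ◆_P ■_F χ → χ`. -/
lemma dPbF (χ : TForm) : TS4 (((χ.bF).dP).imp χ) := by
  have h1 : TS4 (χ.neg.imp ((χ.bF).neg).bP) :=
    syll (TS4.tense1 χ.neg) (bPMon (pre _ (bFMon (dni χ))))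
  exact syll (pre _ h1) (TS4.dne χ)

/-- `⊢ ◆_F ■_P χ → χ`. -/
lemma dFbP (χ : TForm) : TS4 (((χ.bP).dF).imp χ) := by
  have h1 : TS4 (χ.neg.imp ((χ.bP).neg).bF) :=
    syll (TS4.tense2 χ.neg) (bFMon (pre _ (bPMon (dni χ))))
  exact syll (pre _ h1) (TS4.dne χ)

/-! ### The pass condition in the canonical frame -/

open Classical in
lemma canon_pass {x y : W} (h : CQ x y) : ∃ z : W, CR x z ∧ CQ z y ∧ CQ y z := by
  have hcon : Con ({ψ | ψ.box ∈ x.1} ∪ {ψ | ψ.bF ∈ y.1} ∪ {ψ | ψ.bP ∈ y.1}) := by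
    rintro ⟨L, hL, d⟩
    set LA : List TForm := L.filter (fun ψ => decide (ψ.box ∈ x.1)) with hLA
    set LF : List TForm := L.filter (fun ψ => decide (ψ.bF ∈ y.1)) with hLF
    set LP : List TForm := L.filter (fun ψ => decide (ψ.bP ∈ y.1)) with hLP
    have hsub : ∀ ψ ∈ L, ψ ∈ LA ++ (LF ++ LP) := by
      intro ψ hψ
      rcases hL ψ hψ with (h' | h') | h'
      · exact List.mem_append.2 (Or.inl (List.mem_filter.2 ⟨hψ, by simpa using h'⟩))
      · exact List.mem_append.2 (Or.inr (List.mem_append.2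
          (Or.inl (List.mem_filter.2 ⟨hψ, by simpa using h'⟩))))
      · exact List.mem_append.2 (Or.inr (List.mem_append.2
          (Or.inr (List.mem_filter.2 ⟨hψ, by simpa using h'⟩))))
    have hLAx : ∀ ψ ∈ LA, ψ.box ∈ x.1 := by
      intro ψ hψ; simpa using (List.mem_filter.1 hψ).2
    have hLFy : ∀ ψ ∈ LF, ψ.bF ∈ y.1 := by
      intro ψ hψ; simpa using (List.mem_filter.1 hψ).2
    have hLPy : ∀ ψ ∈ LP, ψ.bP ∈ y.1 := by
      intro ψ hψ; simpa using (List.mem_filter.1 hψ).2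
    set α := conj LA with hα
    set χ := conj LF with hχ
    set δ := conj LP with hδ
    -- ⊢ α ∧ (χ ∧ δ) → ⊥
    have d1 : TS4 ((α.and (χ.and δ)).imp .bot) := by
      have e2 : TS4 ((α.and (χ.and δ)).imp (α.and (conj (LF ++ LP)))) :=
        andI (TS4.a3 _ _) (syll (TS4.a4 _ _) (conjAppend LF LP))
      exact syll e2 (syll (conjAppend LA (LF ++ LP)) (syll (conjSub hsub) d))
    have hneg : TS4 (α.imp ((χ.and δ).neg)) := flipR (curry d1)
    have hboxneg : ((χ.and δ).neg).box ∈ x.1 :=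
      mem_of_conj hLAx (syll (conjBox LA) (boxMon hneg))
    have hbFχ : χ.bF ∈ y.1 := mem_of_conj hLFy (conjbF LF)
    have hbPδ : δ.bP ∈ y.1 := mem_of_conj hLPy (conjbP LP)
    set p := (χ.bF).and (δ.bP) with hp
    have hpy : p ∈ y.1 := y.2.and_iff.2 ⟨hbFχ, hbPδ⟩
    have hdFp : p.dF ∈ x.1 := by
      have h1 : (p.neg).bF ∉ x.1 := fun hc =>
        y.2.not_bot (y.2.mp (h _ hc) hpy)
      exact (x.2.2 _).resolve_left h1
    set θ := (p.dF).and p.dP with hθ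
    have hdia : ((θ.neg).box).neg ∈ x.1 := x.2.mp (x.2.thm (TS4.conn2 p)) hdFp
    have tθ : TS4 (θ.imp (χ.and δ)) := by
      refine andI ?_ ?_
      · exact syll (TS4.a4 _ _) (syll (dPMon (TS4.a3 _ _)) (dPbF χ))
      · exact syll (TS4.a3 _ _) (syll (dFMon (TS4.a4 _ _)) (dFbP δ))
    have hboxθ : (θ.neg).box ∈ x.1 :=
      x.2.mp (x.2.thm (boxMon (pre _ tθ))) hboxneg
    exact x.2.not_bot (x.2.mp hdia hboxθ)
  obtain ⟨Δ, hΔ1, hΔ2⟩ := lindenbaum hcon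
  refine ⟨⟨Δ, hΔ2⟩, ?_, ?_, ?_⟩
  · exact fun ψ hψ => hΔ1 (Or.inl (Or.inl hψ))
  · exact tense_bwd fun ψ hψ => hΔ1 (Or.inr hψ)
  · exact fun ψ hψ => hΔ1 (Or.inl (Or.inr hψ))

end TS4Canon

namespace TS4Canon
open TForm

/-! ### The canonical frame and truth lemma -/

lemma canon_frame : IsTS4Frame CR CQ where
  rrefl := CR.refl
  rtrans := fun _ _ _ => CR.trans
  qrefl := CQ.refl
  qtrans := fun _ _ _ => CQ.trans
  rsubq := fun _ _ => CR.subQ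
  pass := fun _ _ => canon_pass

def canonVal (n : ℕ) : Set W := {x | TForm.var n ∈ x.1}

lemma truth : ∀ (φ : TForm) (x : W), tsat CR CQ canonVal φ x ↔ φ ∈ x.1 := by
  intro φ
  induction φ with
  | var n => intro x; exact Iff.rfl
  | bot => intro x; simp [tsat]; exact fun h => x.2.not_bot h
  | and φ ψ ih1 ih2 =>
      intro x; simp only [tsat, ih1, ih2, x.2.and_iff]
  | or φ ψ ih1 ih2 =>
      intro x; simp only [tsat, ih1, ih2, x.2.or_iff]
  | imp φ ψ ih1 ih2 =>
      intro x; simp only [tsat, ih1, ih2, x.2.imp_iff]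
  | box φ ih =>
      intro x
      constructor
      · intro hs
        by_contra hb
        obtain ⟨y, hR, hφ⟩ := boxEx hb
        exact hφ ((ih y).1 (hs y hR))
      · intro hb y hR; exact (ih y).2 (hR φ hb)
  | bF φ ih =>
      intro x
      constructor
      · intro hs
        by_contra hb
        obtain ⟨y, hQ, hφ⟩ := bFEx hb
        exact hφ ((ih y).1 (hs y hQ))
      · intro hb y hQ; exact (ih y).2 (hQ φ hb)
  | bP φ ih =>
      intro x
      constructor
      · intro hs
        by_contra hb
        obtain ⟨y, hQ, hφ⟩ := bPEx hb
        exact hφ ((ih y).1 (hs y hQ))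
      · intro hb y hQ; exact (ih y).2 (tense_fwd hQ φ hb)

/-! ### Completeness -/

lemma prov_empty {φ : TForm} (h : Prov (∅ : Set TForm) φ) : TS4 φ := by
  obtain ⟨L, hL, d⟩ := h
  cases L with
  | nil => exact TS4.mp _ _ d notBot
  | cons a L => exact absurd (hL a (List.mem_cons_self)) (Set.notMem_empty a)

lemma completeness {φ : TForm}
    (h : ∀ (X : Type) (R Q : X → X → Prop), IsTS4Frame R Q → tValid R Q φ) : TS4 φ := by
  by_contra hφ
  have hcon : Con {φ.neg} := by
    intro hc
    have h1 : Prov (∅ : Set TForm) (φ.neg.imp .bot) := by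
      apply deduction
      simpa using hc
    exact hφ (TS4.mp _ _ (TS4.dne φ) (prov_empty h1))
  obtain ⟨Δ, hΔ1, hΔ2⟩ := lindenbaum hcon
  have hx : φ ∉ Δ := fun hφ' =>
    hΔ2.not_bot (hΔ2.mp (hΔ1 rfl) hφ')
  have := h W CR CQ canon_frame canonVal ⟨Δ, hΔ2⟩
  exact hx ((truth φ ⟨Δ, hΔ2⟩).1 this)

/-! ### Soundness -/

section Soundness
variable {X : Type} {R Q : X → X → Prop}

lemma soundness {φ : TForm} (h : TS4 φ) :
    ∀ (X : Type) (R Q : X → X → Prop), IsTS4Frame R Q → tValid R Q φ := by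
  induction h with
  | a1 φ ψ => intro X R Q hF v x; simp only [tsat]; tauto
  | a2 φ ψ χ => intro X R Q hF v x; simp only [tsat]; tauto
  | a3 φ ψ => intro X R Q hF v x; simp only [tsat]; tauto
  | a4 φ ψ => intro X R Q hF v x; simp only [tsat]; tauto
  | a5 φ ψ => intro X R Q hF v x; simp only [tsat]; tauto
  | a6 φ ψ => intro X R Q hF v x; simp only [tsat]; tauto
  | a7 φ ψ => intro X R Q hF v x; simp only [tsat]; tauto
  | a8 φ ψ χ => intro X R Q hF v x; simp only [tsat]; tauto
  | a9 φ => intro X R Q hF v x; simp only [tsat]; tauto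
  | dne φ =>
      intro X R Q hF v x
      simp only [TForm.neg, tsat]
      tauto
  | boxK φ ψ =>
      intro X R Q hF v x
      simp only [tsat]
      intro h1 h2 y hy
      exact h1 y hy (h2 y hy)
  | boxT φ =>
      intro X R Q hF v x
      simp only [tsat]
      intro h1; exact h1 x (hF.rrefl x)
  | box4 φ =>
      intro X R Q hF v x
      simp only [tsat]
      intro h1 y hy z hz
      exact h1 z (hF.rtrans _ _ _ hy hz)
  | bFK φ ψ =>
      intro X R Q hF v x
      simp only [tsat]
      intro h1 h2 y hy
      exact h1 y hy (h2 y hy)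
  | bFT φ =>
      intro X R Q hF v x
      simp only [tsat]
      intro h1; exact h1 x (hF.qrefl x)
  | bF4 φ =>
      intro X R Q hF v x
      simp only [tsat]
      intro h1 y hy z hz
      exact h1 z (hF.qtrans _ _ _ hy hz)
  | bPK φ ψ =>
      intro X R Q hF v x
      simp only [tsat]
      intro h1 h2 y hy
      exact h1 y hy (h2 y hy)
  | bPT φ =>
      intro X R Q hF v x
      simp only [tsat]
      intro h1; exact h1 x (hF.qrefl x)
  | bP4 φ =>
      intro X R Q hF v x
      simp only [tsat]
      intro h1 y hy z hz
      exact h1 z (hF.qtrans _ _ _ hz hy)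
  | tense1 φ =>
      intro X R Q hF v x
      simp only [TForm.dF, TForm.neg, tsat]
      intro h1 y hy hc
      exact hc x hy h1
  | tense2 φ =>
      intro X R Q hF v x
      simp only [TForm.dP, TForm.neg, tsat]
      intro h1 y hy hc
      exact hc x hy h1
  | conn1 φ =>
      intro X R Q hF v x
      simp only [TForm.dia, TForm.dF, TForm.neg, tsat]
      intro h1 h2
      exact h1 fun y hy => h2 y (hF.rsubq x y hy)
  | conn2 φ =>
      intro X R Q hF v x
      simp only [TForm.dia, TForm.dF, TForm.dP, TForm.neg, tsat]
      intro h1 hc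
      apply h1
      intro y hy hφy
      obtain ⟨z, hxz, hzy, hyz⟩ := hF.pass x y hy
      apply hc z hxz
      constructor
      · intro hz; exact hz y hzy hφy
      · intro hz; exact hz y hyz hφy
  | mp φ ψ h1 h2 ih1 ih2 =>
      intro X R Q hF v x
      exact ih1 X R Q hF v x (ih2 X R Q hF v x)
  | necBox φ h ih =>
      intro X R Q hF v x y hy
      exact ih X R Q hF v y
  | necF φ h ih =>
      intro X R Q hF v x y hy
      exact ih X R Q hF v y
  | necP φ h ih =>
      intro X R Q hF v x y hy
      exact ih X R Q hF v y

end Soundness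
end TS4Canon

/-- `TS4` is sound and complete with respect to TS4-frames. -/
theorem TS4_soundness_completeness (φ : TForm) :
    TS4 φ ↔ ∀ (X : Type) (R Q : X → X → Prop), IsTS4Frame R Q → tValid R Q φ := by
  exact ⟨TS4Canon.soundness, TS4Canon.completeness⟩
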